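/- arXiv:2205.10772 — 4 statements merged into one kernel-verified Lean document; each statement's English description precedes it below -/
import Mathlib

section
/- Let L be a real inner product space, let m' ≤ m be positive integers, let Ψ : {1,…,m'} → L and Ĝ : {1,…,m} → L be families of vectors, and let Ξ be a real m × m' matrix such that a‖θ‖ ≤ ‖Ξθ‖ ≤ b‖θ‖ for all θ ∈ ℝ^{m'}, where 0 < a ≤ b. Set ε := (∑_{j=1}^{m} ‖Ĝ_j − ∑_{i=1}^{m'} Ξ_{ji} Ψ_i‖²)^{1/2}. Then ΞᵀΞ is invertible, and for every e* ∈ ℝ^{m'}, the vector c := Ξ(ΞᵀΞ)⁻¹e* ∈ ℝ^m and the element g̃ := ∑_{j=1}^{m} c_j Ĝ_j ∈ L satisfy ‖c‖ ≤ (b/a²)‖e*‖ and ‖g̃ − ∑_{i=1}^{m'} e*_i Ψ_i‖ ≤ (b/a²) ‖e*‖ ε. -/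
open scoped BigOperators
open scoped Matrix

/-- The Euclidean norm on `ℝ^n`. -/
noncomputable def euclNorm {n : ℕ} (v : Fin n → ℝ) : ℝ :=
  Real.sqrt (∑ i, v i ^ 2)

lemma euclNorm_nonneg {n : ℕ} (v : Fin n → ℝ) : 0 ≤ euclNorm v :=
  Real.sqrt_nonneg _

lemma sq_euclNorm {n : ℕ} (v : Fin n → ℝ) : euclNorm v ^ 2 = ∑ i, v i ^ 2 :=
  Real.sq_sqrt (Finset.sum_nonneg fun _ _ => sq_nonneg _)

lemma euclNorm_eq_zero {n : ℕ} {v : Fin n → ℝ} (h : euclNorm v = 0) : v = 0 := by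
  have hs : (∑ i, v i ^ 2) = 0 := by
    have := congrArg (· ^ 2) h
    simpa [sq_euclNorm] using this
  funext i
  have := (Finset.sum_eq_zero_iff_of_nonneg (fun i _ => sq_nonneg (v i))).mp hs i
    (Finset.mem_univ i)
  exact pow_eq_zero_iff (two_ne_zero) |>.mp this

/-- Cauchy–Schwarz for the euclidean norm. -/
lemma euclCS {n : ℕ} (v w : Fin n → ℝ) : ∑ i, v i * w i ≤ euclNorm v * euclNorm w := by
  have h := Finset.sum_mul_sq_le_sq_mul_sq Finset.univ v w
  calc ∑ i, v i * w i ≤ |∑ i, v i * w i| := le_abs_self _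
    _ = Real.sqrt ((∑ i, v i * w i) ^ 2) := (Real.sqrt_sq_eq_abs _).symm
    _ ≤ Real.sqrt ((∑ i, v i ^ 2) * ∑ i, w i ^ 2) := Real.sqrt_le_sqrt h
    _ = euclNorm v * euclNorm w := by
        unfold euclNorm
        rw [Real.sqrt_mul (Finset.sum_nonneg fun _ _ => sq_nonneg _)]

/-- Deterministic core of Theorem 1 (approximation error of the learned kernel):
if the Gaussian coefficient matrix `Ξ` has all singular values in `[a, b]`, then `ΞᵀΞ` is
invertible, and the least-squares reconstruction `g̃ = ∑ c_j Ghat_j`, `c = Ξ(ΞᵀΞ)⁻¹ e*`,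
approximates `∑ e*_i Ψ_i` up to `(b/a²)·‖e*‖·ε`, where `ε` is the aggregate estimation error
of the `Ghat_j`. -/
theorem stmt0
    {L : Type*} [NormedAddCommGroup L] [InnerProductSpace ℝ L]
    {m m' : ℕ} (hm' : 0 < m') (hmm : m' ≤ m)
    (Ψ : Fin m' → L) (Ghat : Fin m → L)
    (Ξ : Matrix (Fin m) (Fin m') ℝ)
    (a b : ℝ) (ha : 0 < a) (hab : a ≤ b)
    (hlow : ∀ θ : Fin m' → ℝ, a * euclNorm θ ≤ euclNorm (Ξ.mulVec θ))
    (hup : ∀ θ : Fin m' → ℝ, euclNorm (Ξ.mulVec θ) ≤ b * euclNorm θ)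
    (ε : ℝ)
    (hε : ε = Real.sqrt (∑ j : Fin m, ‖Ghat j - ∑ i : Fin m', Ξ j i • Ψ i‖ ^ 2)) :
    IsUnit (Ξ.transpose * Ξ) ∧
      ∀ estar : Fin m' → ℝ,
        euclNorm (Ξ.mulVec ((Ξ.transpose * Ξ)⁻¹.mulVec estar)) ≤ (b / a ^ 2) * euclNorm estar ∧
        ‖(∑ j : Fin m, Ξ.mulVec ((Ξ.transpose * Ξ)⁻¹.mulVec estar) j • Ghat j)
            - ∑ i : Fin m', estar i • Ψ i‖ ≤ (b / a ^ 2) * euclNorm estar * ε := by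
  set M := Ξ.transpose * Ξ with hMdef
  -- key quadratic form identity
  have key : ∀ θ : Fin m' → ℝ, θ ⬝ᵥ M.mulVec θ = euclNorm (Ξ.mulVec θ) ^ 2 := by
    intro θ
    rw [hMdef, ← Matrix.mulVec_mulVec, Matrix.dotProduct_mulVec, Matrix.vecMul_transpose,
      sq_euclNorm]
    simp [dotProduct, sq]
  -- Ξ has trivial kernel
  have hker : ∀ θ : Fin m' → ℝ, M.mulVec θ = 0 → θ = 0 := by
    intro θ h0
    have h1 : euclNorm (Ξ.mulVec θ) ^ 2 = 0 := by
      rw [← key θ, h0, dotProduct_zero]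
    have h2 : euclNorm (Ξ.mulVec θ) = 0 := by
      exact pow_eq_zero_iff (two_ne_zero) |>.mp h1
    have h3 := hlow θ
    rw [h2] at h3
    have : euclNorm θ = 0 := by nlinarith [euclNorm_nonneg θ]
    exact euclNorm_eq_zero this
  have hinj : Function.Injective M.mulVec := by
    intro x y hxy
    have : M.mulVec (x - y) = 0 := by
      rw [Matrix.mulVec_sub, hxy, sub_self]
    have := hker _ this
    exact sub_eq_zero.mp this
  have hM : IsUnit M := Matrix.mulVec_injective_iff_isUnit.mp hinj
  refine ⟨hM, fun estar => ?_⟩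
  have hMinv : M * M⁻¹ = 1 := Matrix.mul_nonsing_inv _ ((Matrix.isUnit_iff_isUnit_det _).mp hM)
  set θ := M⁻¹.mulVec estar with hθdef
  set c := Ξ.mulVec θ with hcdef
  have heq : M.mulVec θ = estar := by
    rw [hθdef, Matrix.mulVec_mulVec, hMinv, Matrix.one_mulVec]
  -- bound on euclNorm θ
  have hθe : a ^ 2 * euclNorm θ ≤ euclNorm estar := by
    have h1 : (a * euclNorm θ) ^ 2 ≤ euclNorm c ^ 2 :=
      pow_le_pow_left₀ (mul_nonneg ha.le (euclNorm_nonneg _)) (hlow θ) 2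
    have h2 : euclNorm c ^ 2 = θ ⬝ᵥ estar := by rw [← key θ, heq]
    have h3 : θ ⬝ᵥ estar ≤ euclNorm θ * euclNorm estar := euclCS θ estar
    have h4 : a ^ 2 * euclNorm θ ^ 2 ≤ euclNorm θ * euclNorm estar := by
      calc a ^ 2 * euclNorm θ ^ 2 = (a * euclNorm θ) ^ 2 := by ring
        _ ≤ euclNorm c ^ 2 := h1
        _ = θ ⬝ᵥ estar := h2
        _ ≤ _ := h3
    rcases eq_or_lt_of_le (euclNorm_nonneg θ) with h0 | h0
    · rw [← h0, mul_zero]; exact euclNorm_nonneg estar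
    · nlinarith
  have ha2 : (0:ℝ) < a ^ 2 := pow_pos ha 2
  have hbnd : euclNorm c ≤ b / a ^ 2 * euclNorm estar := by
    calc euclNorm c ≤ b * euclNorm θ := hup θ
      _ ≤ b * (euclNorm estar / a ^ 2) := by
          apply mul_le_mul_of_nonneg_left _ (ha.le.trans hab)
          rw [le_div_iff₀ ha2]
          linarith
      _ = b / a ^ 2 * euclNorm estar := by ring
  refine ⟨hbnd, ?_⟩
  -- the residual identity
  have hcoef : ∀ i, (∑ j, c j * Ξ j i) = estar i := by
    intro i
    have h1 : Ξ.transpose.mulVec c = estar := by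
      rw [hcdef, Matrix.mulVec_mulVec, ← hMdef, heq]
    have := congrFun h1 i
    simpa [Matrix.mulVec, dotProduct, Matrix.transpose_apply, mul_comm] using this
  have hres : (∑ j : Fin m, c j • Ghat j) - ∑ i : Fin m', estar i • Ψ i
      = ∑ j : Fin m, c j • (Ghat j - ∑ i : Fin m', Ξ j i • Ψ i) := by
    have h2 : ∑ j : Fin m, c j • (∑ i : Fin m', Ξ j i • Ψ i)
        = ∑ i : Fin m', estar i • Ψ i := by
      calc ∑ j : Fin m, c j • (∑ i : Fin m', Ξ j i • Ψ i)
          = ∑ j : Fin m, ∑ i : Fin m', (c j * Ξ j i) • Ψ i := by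
            simp [Finset.smul_sum, smul_smul]
        _ = ∑ i : Fin m', ∑ j : Fin m, (c j * Ξ j i) • Ψ i := Finset.sum_comm
        _ = ∑ i : Fin m', (∑ j : Fin m, c j * Ξ j i) • Ψ i := by
            simp [Finset.sum_smul]
        _ = ∑ i : Fin m', estar i • Ψ i := by simp [hcoef]
    simp only [smul_sub, Finset.sum_sub_distrib, h2]
  rw [hres]
  -- norm bound via triangle + Cauchy–Schwarz
  have htr : ‖∑ j : Fin m, c j • (Ghat j - ∑ i : Fin m', Ξ j i • Ψ i)‖
      ≤ ∑ j : Fin m, |c j| * ‖Ghat j - ∑ i : Fin m', Ξ j i • Ψ i‖ := by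
    refine (norm_sum_le _ _).trans ?_
    apply le_of_eq
    congr 1
    funext j
    rw [norm_smul, Real.norm_eq_abs]
  have hcs : ∑ j : Fin m, |c j| * ‖Ghat j - ∑ i : Fin m', Ξ j i • Ψ i‖
      ≤ euclNorm c * ε := by
    have := euclCS (fun j => |c j|) (fun j => ‖Ghat j - ∑ i : Fin m', Ξ j i • Ψ i‖)
    have habs : euclNorm (fun j => |c j|) = euclNorm c := by
      unfold euclNorm; simp [sq_abs]
    have hεeq : euclNorm (fun j => ‖Ghat j - ∑ i : Fin m', Ξ j i • Ψ i‖) = ε := by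
      rw [hε]; rfl
    rw [habs, hεeq] at this
    exact this
  have hεnn : 0 ≤ ε := hε ▸ Real.sqrt_nonneg _
  calc ‖∑ j : Fin m, c j • (Ghat j - ∑ i : Fin m', Ξ j i • Ψ i)‖
      ≤ euclNorm c * ε := htr.trans hcs
    _ ≤ b / a ^ 2 * euclNorm estar * ε := mul_le_mul_of_nonneg_right hbnd hεnn
end

section
/- Let μ be a probability measure on a measurable space Z, let n ≥ 1, and let Z_1, …, Z_n be independent Z-valued random variables on a probability space, each with law μ. Let g : Z → ℝ be measurable with |g(z)| ≤ B for all z ∈ Z, and suppose ∫ g² dμ ≤ s², where B > 0 and s > 0. Then P( (1/n) ∑_{i=1}^{n} g(Z_i)² > 5 s² ) ≤ exp( − n s² / B² ); equivalently, with probability at least 1 − exp(−n s²/B²) one has (1/n) ∑_{i=1}^{n} g(Z_i)² ≤ 5 s². -/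
open scoped BigOperators
open MeasureTheory ProbabilityTheory

lemma exp_le_one_add_aux {u : ℝ} (h0 : 0 ≤ u) (h1 : u ≤ 1) :
    Real.exp u ≤ 1 + (Real.exp 1 - 1) * u := by
  have := convexOn_exp.2 (Set.mem_univ (0:ℝ)) (Set.mem_univ (1:ℝ))
    (by linarith : (0:ℝ) ≤ 1 - u) h0 (by ring)
  simp only [smul_eq_mul, mul_zero, mul_one, zero_add, Real.exp_zero] at this
  nlinarith [this]

/-- Lemma D.5 (concentration of the empirical squared L² norm): for i.i.d. samples `X i`
with law `μ` and a measurable function `g` bounded by `B` with `∫ g² dμ ≤ s²`, the empirical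
second moment exceeds `5 s²` with probability at most `exp(-n s² / B²)`. -/
theorem stmt3
    {Z : Type*} [MeasurableSpace Z] (μ : Measure Z) [IsProbabilityMeasure μ]
    {Ω : Type*} [MeasurableSpace Ω] (P : Measure Ω) [IsProbabilityMeasure P]
    (n : ℕ) (hn : 1 ≤ n) (X : Fin n → Ω → Z)
    (hmeas : ∀ i, Measurable (X i))
    (hindep : iIndepFun X P)
    (hlaw : ∀ i, Measure.map (X i) P = μ)
    (g : Z → ℝ) (hg : Measurable g)
    (B s : ℝ) (hB : 0 < B) (hs : 0 < s)
    (hbd : ∀ z, |g z| ≤ B)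
    (hvar : ∫ z, g z ^ 2 ∂μ ≤ s ^ 2) :
    P {ω | 5 * s ^ 2 < (1 / (n : ℝ)) * ∑ i : Fin n, g (X i ω) ^ 2}
      ≤ ENNReal.ofReal (Real.exp (-((n : ℝ) * s ^ 2 / B ^ 2))) := by
  classical
  have hnpos : (0:ℝ) < n := by exact_mod_cast hn
  set t : ℝ := 1 / B ^ 2 with ht_def
  have htpos : 0 < t := by positivity
  set Y : Fin n → Ω → ℝ := fun i ω => g (X i ω) ^ 2 with hYdef
  have hYmeas : ∀ i, Measurable (Y i) := fun i => (hg.comp (hmeas i)).pow_const 2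
  have hgsq_bd : ∀ z, g z ^ 2 ≤ B ^ 2 := fun z => by
    have := hbd z
    nlinarith [abs_nonneg (g z), sq_abs (g z)]
  have hgsq_nonneg : ∀ z, 0 ≤ g z ^ 2 := fun z => sq_nonneg _
  -- pointwise mgf bound
  have hpt : ∀ z, Real.exp (t * g z ^ 2) ≤ 1 + (Real.exp 1 - 1) * (t * g z ^ 2) := by
    intro z
    refine exp_le_one_add_aux (by positivity) ?_
    rw [ht_def]
    rw [div_mul_eq_mul_div, one_mul, div_le_one (by positivity)]
    exact hgsq_bd z
  -- integrability under μ
  have hint_exp_mu : Integrable (fun z => Real.exp (t * g z ^ 2)) μ := by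
    refine (integrable_const (Real.exp 1)).mono'
      ((hg.pow_const 2).const_mul t).exp.aestronglyMeasurable (ae_of_all _ fun z => ?_)
    rw [Real.norm_eq_abs, abs_of_pos (Real.exp_pos _)]
    apply Real.exp_le_exp.2
    rw [ht_def, div_mul_eq_mul_div, one_mul]
    rw [div_le_one (by positivity)]
    exact hgsq_bd z
  have hint_gsq : Integrable (fun z => g z ^ 2) μ := by
    refine (integrable_const (B ^ 2)).mono'
      (hg.pow_const 2).aestronglyMeasurable (ae_of_all _ fun z => ?_)
    rw [Real.norm_eq_abs, abs_of_nonneg (hgsq_nonneg z)]; exact hgsq_bd z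
  -- mgf of each Y i
  have hmgf_eq : ∀ i, mgf (Y i) P t = ∫ z, Real.exp (t * g z ^ 2) ∂μ := by
    intro i
    rw [mgf, ← hlaw i, integral_map (hmeas i).aemeasurable
      ((hg.pow_const 2).const_mul t).exp.aestronglyMeasurable]
  have hmgf_le : ∀ i, mgf (Y i) P t ≤ Real.exp ((Real.exp 1 - 1) * t * s ^ 2) := by
    intro i
    rw [hmgf_eq i]
    have h1 : ∫ z, Real.exp (t * g z ^ 2) ∂μ
        ≤ ∫ z, (1 + (Real.exp 1 - 1) * (t * g z ^ 2)) ∂μ := by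
      refine integral_mono hint_exp_mu ?_ hpt
      exact (integrable_const 1).add
        (((hint_gsq.const_mul t).const_mul (Real.exp 1 - 1)))
    have h2 : ∫ z, (1 + (Real.exp 1 - 1) * (t * g z ^ 2)) ∂μ
        = 1 + (Real.exp 1 - 1) * t * (∫ z, g z ^ 2 ∂μ) := by
      rw [integral_add (integrable_const 1)
        ((hint_gsq.const_mul t).const_mul (Real.exp 1 - 1))]
      simp only [integral_const, measure_univ, probReal_univ, ENNReal.toReal_one, smul_eq_mul, one_mul]
      rw [← integral_const_mul]
      exact congrArg (1 + ·) (integral_congr_ae (ae_of_all _ fun z => by ring))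
    have he1 : (0:ℝ) ≤ Real.exp 1 - 1 := by
      nlinarith [Real.one_le_exp (le_refl (0:ℝ)), Real.exp_lt_exp.2 (by norm_num : (0:ℝ) < 1)]
    have h3 : 1 + (Real.exp 1 - 1) * t * (∫ z, g z ^ 2 ∂μ)
        ≤ 1 + (Real.exp 1 - 1) * t * s ^ 2 := by
      have : (0:ℝ) ≤ (Real.exp 1 - 1) * t := by positivity
      nlinarith
    calc ∫ z, Real.exp (t * g z ^ 2) ∂μ ≤ 1 + (Real.exp 1 - 1) * t * s ^ 2 := by linarith
      _ ≤ Real.exp ((Real.exp 1 - 1) * t * s ^ 2) := by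
          have := Real.add_one_le_exp ((Real.exp 1 - 1) * t * s ^ 2)
          linarith
  -- independence of Y
  have hYindep : iIndepFun Y P :=
    hindep.comp (fun _ z => g z ^ 2) (fun _ => hg.pow_const 2)
  -- integrability of exp(t * sum)
  have hint_sum : Integrable (fun ω => Real.exp (t * (∑ i : Fin n, Y i) ω)) P := by
    have hm : Measurable fun ω => Real.exp (t * (∑ i : Fin n, Y i) ω) := by
      have : Measurable fun ω => ∑ i : Fin n, Y i ω :=
        Finset.measurable_sum _ fun i _ => hYmeas i
      simpa [Finset.sum_apply] using (this.const_mul t).exp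
    refine (integrable_const (Real.exp (t * (n * B ^ 2)))).mono'
      hm.aestronglyMeasurable (ae_of_all _ fun ω => ?_)
    rw [Real.norm_eq_abs, abs_of_pos (Real.exp_pos _)]
    apply Real.exp_le_exp.2
    apply mul_le_mul_of_nonneg_left _ htpos.le
    rw [Finset.sum_apply]
    calc ∑ i : Fin n, Y i ω ≤ ∑ _i : Fin n, B ^ 2 :=
          Finset.sum_le_sum fun i _ => hgsq_bd _
      _ = n * B ^ 2 := by simp [mul_comm]
  -- Chernoff
  have hcher := measure_ge_le_exp_mul_mgf (μ := P) (X := ∑ i : Fin n, Y i)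
    (5 * n * s ^ 2) htpos.le hint_sum
  rw [hYindep.mgf_sum hYmeas] at hcher
  -- event inclusion
  have hsub : {ω | 5 * s ^ 2 < (1 / (n : ℝ)) * ∑ i : Fin n, g (X i ω) ^ 2}
      ⊆ {ω | 5 * n * s ^ 2 ≤ (∑ i : Fin n, Y i) ω} := by
    intro ω hω
    simp only [Set.mem_setOf_eq] at hω ⊢
    rw [Finset.sum_apply]
    have : 5 * s ^ 2 * n < ∑ i : Fin n, g (X i ω) ^ 2 := by
      have := (lt_div_iff₀ hnpos).mp (by rwa [one_div, inv_mul_eq_div] at hω)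
      linarith
    have heq : (∑ i : Fin n, Y i ω) = ∑ i : Fin n, g (X i ω) ^ 2 := rfl
    rw [heq]; linarith
  -- final bound on the real side
  have hprod : (∏ _i : Fin n, Real.exp ((Real.exp 1 - 1) * t * s ^ 2))
      = Real.exp (n * ((Real.exp 1 - 1) * t * s ^ 2)) := by
    rw [Finset.prod_const, ← Real.exp_nat_mul]
    simp
  have hprod_le : (∏ i : Fin n, mgf (Y i) P t)
      ≤ Real.exp (n * ((Real.exp 1 - 1) * t * s ^ 2)) := by
    rw [← hprod]
    exact Finset.prod_le_prod (fun i _ => mgf_nonneg) (fun i _ => hmgf_le i)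
  have hfinal : Real.exp (-t * (5 * n * s ^ 2)) * (∏ i : Fin n, mgf (Y i) P t)
      ≤ Real.exp (-((n : ℝ) * s ^ 2 / B ^ 2)) := by
    calc Real.exp (-t * (5 * n * s ^ 2)) * (∏ i : Fin n, mgf (Y i) P t)
        ≤ Real.exp (-t * (5 * n * s ^ 2)) * Real.exp (n * ((Real.exp 1 - 1) * t * s ^ 2)) := by
          exact mul_le_mul_of_nonneg_left hprod_le (Real.exp_pos _).le
      _ = Real.exp (-t * (5 * n * s ^ 2) + n * ((Real.exp 1 - 1) * t * s ^ 2)) :=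
          (Real.exp_add _ _).symm
      _ ≤ Real.exp (-((n : ℝ) * s ^ 2 / B ^ 2)) := by
          apply Real.exp_le_exp.2
          have he : Real.exp 1 < 2.7182818286 := Real.exp_one_lt_d9
          have hts : -((n : ℝ) * s ^ 2 / B ^ 2) = -t * (n * s ^ 2) := by
            rw [ht_def]; field_simp
          rw [hts]
          have hfact : -t * (5 * n * s ^ 2) + n * ((Real.exp 1 - 1) * t * s ^ 2)
              = t * (n * s ^ 2) * (Real.exp 1 - 6) := by ring
          rw [hfact]
          have h1 : (0:ℝ) < t * (n * s ^ 2) := by positivity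
          nlinarith
  -- combine
  calc P {ω | 5 * s ^ 2 < (1 / (n : ℝ)) * ∑ i : Fin n, g (X i ω) ^ 2}
      ≤ P {ω | 5 * n * s ^ 2 ≤ (∑ i : Fin n, Y i) ω} := measure_mono hsub
    _ ≤ ENNReal.ofReal (Real.exp (-((n : ℝ) * s ^ 2 / B ^ 2))) := by
        rw [← ENNReal.ofReal_toReal (measure_ne_top P _)]
        exact ENNReal.ofReal_le_ofReal (le_trans hcher hfinal)
end

section
/- Let b > 1, C > 0 and K > 0. Let V be the space of real sequences a = (a_i)_{i≥1} with ‖a‖_I² := ∑_{i≥1} i^{b+1} a_i² < ∞, and for a square-summable sequence write ‖a‖_2² := ∑_{i≥1} a_i². Let N be a seminorm on the space of square-summable real sequences such that N(a) ≤ K ‖a‖_I^{(b−1)/(b+1)} ‖a‖_2^{2/(b+1)} for every a ∈ V. Then there exists a constant C' > 0, depending only on b, C, K, with the following property: for every integer n ≥ 1, setting τ := n^{−b/(2(b+1))} and m := ⌊n^{1/(b+1)}⌋, whenever a square-summable sequence a decomposes as a = h + e with h ∈ V, ‖h‖_I² ≤ C n τ², ‖e‖_2² ≤ C τ², and N(e)²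 ≤ C n^{−1/(b+1)}, then the truncated decomposition h' := (a_i 1_{i≤m})_{i≥1}, e' := (a_i 1_{i>m})_{i≥1} satisfies ‖h'‖_I² ≤ C' n τ², ‖e'‖_2² ≤ C' τ², and N(e')² ≤ C' n^{−1/(b+1)}. -/
open scoped BigOperators

/-- Squared `I`-norm (weighted ℓ² norm with weights `(i+1)^{b+1}`, indices shifted so that
the sequence entry `x i` plays the role of `a_{i+1}` in the paper). -/
noncomputable def normIsq (b : ℝ) (x : ℕ → ℝ) : ℝ :=
  ∑' i : ℕ, ((i : ℝ) + 1) ^ (b + 1) * x i ^ 2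

/-- Squared ℓ² norm of a sequence. -/
noncomputable def norm2sq (x : ℕ → ℝ) : ℝ :=
  ∑' i : ℕ, x i ^ 2

lemma interp_aux (b C : ℝ) (hb : 1 < b) (hC : 0 < C) (n : ℕ) (hn : 1 ≤ n)
    (X Y : ℝ) (hX0 : 0 ≤ X) (hY0 : 0 ≤ Y)
    (hX : X ≤ C * n * ((n : ℝ) ^ (-(b / (2 * (b + 1))))) ^ 2)
    (hY : Y ≤ C * ((n : ℝ) ^ (-(b / (2 * (b + 1))))) ^ 2) :
    Real.sqrt X ^ ((b - 1) / (b + 1)) * Real.sqrt Y ^ (2 / (b + 1))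
      ≤ Real.sqrt C * (n : ℝ) ^ (-(1 / (2 * (b + 1)))) := by
  have hb1 : (0:ℝ) < b + 1 := by linarith
  have npos : (0:ℝ) < n := by exact_mod_cast Nat.lt_of_lt_of_le Nat.zero_lt_one hn
  have hp0 : 0 ≤ (b - 1) / (b + 1) := div_nonneg (by linarith) (by linarith)
  have hq0 : 0 ≤ 2 / (b + 1) := by positivity
  have hτ2 : ((n : ℝ) ^ (-(b / (2 * (b + 1))))) ^ 2 = (n:ℝ) ^ (-(b/(b+1))) := by
    rw [← Real.rpow_natCast ((n:ℝ) ^ (-(b / (2 * (b + 1))))) 2, ← Real.rpow_mul npos.le]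
    congr 1
    field_simp
    ring
  have e1 : C * n * ((n : ℝ) ^ (-(b / (2 * (b + 1))))) ^ 2 = C * (n:ℝ) ^ (1/(b+1)) := by
    rw [hτ2]
    nth_rewrite 1 [show ((n:ℝ)) = (n:ℝ) ^ (1:ℝ) by rw [Real.rpow_one]]
    rw [mul_assoc, ← Real.rpow_add npos]
    congr 2
    field_simp
    ring
  have e2 : C * ((n : ℝ) ^ (-(b / (2 * (b + 1))))) ^ 2 = C * (n:ℝ) ^ (-(b/(b+1))) := by
    rw [hτ2]
  have s1 : Real.sqrt (C * (n:ℝ) ^ (1/(b+1))) = Real.sqrt C * (n:ℝ) ^ (1/(2*(b+1))) := by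
    rw [Real.sqrt_mul hC.le]
    congr 1
    rw [Real.sqrt_eq_rpow, ← Real.rpow_mul npos.le]
    congr 1
    field_simp

  have s2 : Real.sqrt (C * (n:ℝ) ^ (-(b/(b+1)))) = Real.sqrt C * (n:ℝ) ^ (-(b/(2*(b+1)))) := by
    rw [Real.sqrt_mul hC.le]
    congr 1
    rw [Real.sqrt_eq_rpow, ← Real.rpow_mul npos.le]
    congr 1
    field_simp
    try ring
    try tauto
  have hCs : (0:ℝ) < Real.sqrt C := Real.sqrt_pos.mpr hC
  have step1 : Real.sqrt X ^ ((b - 1) / (b + 1))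
      ≤ (Real.sqrt C * (n:ℝ) ^ (1/(2*(b+1)))) ^ ((b - 1) / (b + 1)) := by
    rw [← s1, ← e1]
    exact Real.rpow_le_rpow (Real.sqrt_nonneg X) (Real.sqrt_le_sqrt hX) hp0
  have step2 : Real.sqrt Y ^ (2 / (b + 1))
      ≤ (Real.sqrt C * (n:ℝ) ^ (-(b/(2*(b+1))))) ^ (2 / (b + 1)) := by
    rw [← s2, ← e2]
    exact Real.rpow_le_rpow (Real.sqrt_nonneg Y) (Real.sqrt_le_sqrt hY) hq0
  calc Real.sqrt X ^ ((b - 1) / (b + 1)) * Real.sqrt Y ^ (2 / (b + 1))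
      ≤ (Real.sqrt C * (n:ℝ) ^ (1/(2*(b+1)))) ^ ((b - 1) / (b + 1))
        * (Real.sqrt C * (n:ℝ) ^ (-(b/(2*(b+1))))) ^ (2 / (b + 1)) := by
        apply mul_le_mul step1 step2 (Real.rpow_nonneg (Real.sqrt_nonneg Y) _)
        positivity
    _ = Real.sqrt C * (n : ℝ) ^ (-(1 / (2 * (b + 1)))) := by
        rw [Real.mul_rpow hCs.le (Real.rpow_nonneg npos.le _),
            Real.mul_rpow hCs.le (Real.rpow_nonneg npos.le _),
            ← Real.rpow_mul npos.le, ← Real.rpow_mul npos.le]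
        rw [show Real.sqrt C ^ ((b - 1) / (b + 1)) * ((n:ℝ) ^ (1 / (2 * (b + 1)) * ((b - 1) / (b + 1))))
              * (Real.sqrt C ^ (2 / (b + 1)) * (n:ℝ) ^ (-(b / (2 * (b + 1))) * (2 / (b + 1))))
            = (Real.sqrt C ^ ((b - 1) / (b + 1)) * Real.sqrt C ^ (2 / (b + 1)))
              * ((n:ℝ) ^ (1 / (2 * (b + 1)) * ((b - 1) / (b + 1))) * (n:ℝ) ^ (-(b / (2 * (b + 1))) * (2 / (b + 1)))) by ring]
        rw [← Real.rpow_add hCs, ← Real.rpow_add npos]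
        rw [show (b - 1) / (b + 1) + 2 / (b + 1) = 1 by field_simp; ring, Real.rpow_one]
        rw [show 1 / (2 * (b + 1)) * ((b - 1) / (b + 1)) + -(b / (2 * (b + 1))) * (2 / (b + 1)) = -(1 / (2 * (b + 1))) by field_simp; ring]

set_option maxHeartbeats 2000000 in
/-- Lemma D.1 (ii) (sieve sets for Gaussian priors): if a square-summable sequence `a`
decomposes as `a = h + e` with `‖h‖_I² ≤ C n τ²`, `‖e‖_2² ≤ C τ²`, `N(e)² ≤ C n^{-1/(b+1)}`
(`τ = n^{-b/(2(b+1))}`, `N` a seminorm satisfying the interpolation inequality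
`N(x) ≤ K ‖x‖_I^{(b-1)/(b+1)} ‖x‖_2^{2/(b+1)}`), then the spectral truncation at level
`m = ⌊n^{1/(b+1)}⌋` gives a decomposition satisfying the same bounds with a constant `C'`
depending only on `b`, `C`, `K`. -/
theorem stmt4 (b C K : ℝ) (hb : 1 < b) (hC : 0 < C) (hK : 0 < K) :
    ∃ C' : ℝ, 0 < C' ∧
      ∀ N : (ℕ → ℝ) → ℝ,
        (∀ x y : ℕ → ℝ, N (x + y) ≤ N x + N y) →
        (∀ (c : ℝ) (x : ℕ → ℝ), N (c • x) = |c| * N x) →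
        (∀ x : ℕ → ℝ, Summable (fun i : ℕ => ((i : ℝ) + 1) ^ (b + 1) * x i ^ 2) →
          N x ≤ K * Real.sqrt (normIsq b x) ^ ((b - 1) / (b + 1))
                  * Real.sqrt (norm2sq x) ^ (2 / (b + 1))) →
        ∀ n : ℕ, 1 ≤ n →
          ∀ a h e : ℕ → ℝ,
            Summable (fun i : ℕ => a i ^ 2) →
            a = h + e →
            Summable (fun i : ℕ => ((i : ℝ) + 1) ^ (b + 1) * h i ^ 2) →
            normIsq b h ≤ C * n * ((n : ℝ) ^ (-(b / (2 * (b + 1))))) ^ 2 →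
            norm2sq e ≤ C * ((n : ℝ) ^ (-(b / (2 * (b + 1))))) ^ 2 →
            N e ^ 2 ≤ C * (n : ℝ) ^ (-(1 / (b + 1))) →
            normIsq b (fun i => if i < ⌊(n : ℝ) ^ (1 / (b + 1))⌋₊ then a i else 0)
                ≤ C' * n * ((n : ℝ) ^ (-(b / (2 * (b + 1))))) ^ 2 ∧
              norm2sq (fun i => if i < ⌊(n : ℝ) ^ (1 / (b + 1))⌋₊ then 0 else a i)
                ≤ C' * ((n : ℝ) ^ (-(b / (2 * (b + 1))))) ^ 2 ∧
              N (fun i => if i < ⌊(n : ℝ) ^ (1 / (b + 1))⌋₊ then 0 else a i) ^ 2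
                ≤ C' * (n : ℝ) ^ (-(1 / (b + 1))) := by
  refine ⟨9 * C * (1 + K) ^ 2, by positivity, ?_⟩
  intro N hadd hsmul hint n hn a h e hsa hahe hSh hIh hne2 hNe
  have hb1 : (0:ℝ) < b + 1 := by linarith
  have npos : (0:ℝ) < n := by exact_mod_cast Nat.lt_of_lt_of_le Nat.zero_lt_one hn
  set m := ⌊(n : ℝ) ^ (1 / (b + 1))⌋₊ with hm
  set τ := (n : ℝ) ^ (-(b / (2 * (b + 1)))) with hτdef
  have hτpos : 0 < τ := Real.rpow_pos_of_pos npos _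
  have wpos : ∀ i : ℕ, (0:ℝ) < ((i:ℝ)+1) ^ (b+1) :=
    fun i : ℕ => Real.rpow_pos_of_pos (by positivity) _
  have wone : ∀ i : ℕ, (1:ℝ) ≤ ((i:ℝ)+1) ^ (b+1) := by
    intro i
    exact Real.one_le_rpow (by simp [Nat.cast_nonneg]) hb1.le
  have nb : ((n:ℝ) ^ (1/(b+1))) ^ (b+1) = (n:ℝ) := by
    rw [← Real.rpow_mul npos.le, show 1/(b+1)*(b+1) = 1 by field_simp, Real.rpow_one]
  -- weight bounds
  have hwlt : ∀ i : ℕ, i < m → ((i:ℝ)+1) ^ (b+1) ≤ (n:ℝ) := by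
    intro i hi
    have h1 : ((i:ℝ)+1) ≤ (m:ℝ) := by exact_mod_cast Nat.succ_le_of_lt hi
    have h2 : (m:ℝ) ≤ (n:ℝ) ^ (1/(b+1)) := Nat.floor_le (Real.rpow_nonneg npos.le _)
    calc ((i:ℝ)+1) ^ (b+1) ≤ ((n:ℝ) ^ (1/(b+1))) ^ (b+1) :=
          Real.rpow_le_rpow (by positivity) (h1.trans h2) hb1.le
      _ = (n:ℝ) := nb
  have hwge : ∀ i : ℕ, m ≤ i → (n:ℝ) ≤ ((i:ℝ)+1) ^ (b+1) := by
    intro i hi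
    have h1 : (n:ℝ) ^ (1/(b+1)) < (m:ℝ) + 1 := Nat.lt_floor_add_one _
    have h2 : (m:ℝ) + 1 ≤ (i:ℝ) + 1 := by exact_mod_cast Nat.succ_le_succ hi
    calc (n:ℝ) = ((n:ℝ) ^ (1/(b+1))) ^ (b+1) := nb.symm
      _ ≤ ((i:ℝ)+1) ^ (b+1) :=
          Real.rpow_le_rpow (Real.rpow_nonneg npos.le _) (h1.le.trans h2) hb1.le
  clear_value m
  -- summabilities
  have he : ∀ i, e i = a i - h i := by
    intro i; have := congrFun hahe i; simp only [Pi.add_apply] at this; linarith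
  have hSh2 : Summable (fun i : ℕ => h i ^ 2) :=
    hSh.of_nonneg_of_le (fun i : ℕ => sq_nonneg _)
      (fun i : ℕ => le_mul_of_one_le_left (sq_nonneg _) (wone i))
  have hSe2 : Summable (fun i : ℕ => e i ^ 2) := by
    have hbd : ∀ i, e i ^ 2 ≤ 2 * a i ^ 2 + 2 * h i ^ 2 := by
      intro i; rw [he i]; nlinarith [sq_nonneg (a i + h i)]
    exact Summable.of_nonneg_of_le (fun i : ℕ => sq_nonneg _) hbd
      ((hsa.mul_left 2).add (hSh2.mul_left 2))
  -- the dominating summable function for goal 1 / 2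
  have hG : Summable (fun i : ℕ => 2 * (((i:ℝ)+1) ^ (b+1) * h i ^ 2) + 2 * ((n:ℝ) * e i ^ 2)) :=
    (hSh.mul_left 2).add ((hSe2.mul_left ((n:ℝ))).mul_left 2)
  have hGsum : ∑' i : ℕ, (2 * (((i:ℝ)+1) ^ (b+1) * h i ^ 2) + 2 * ((n:ℝ) * e i ^ 2))
      = 2 * normIsq b h + 2 * ((n:ℝ) * norm2sq e) := by
    rw [Summable.tsum_add (hSh.mul_left 2) ((hSe2.mul_left ((n:ℝ))).mul_left 2),
        tsum_mul_left, tsum_mul_left, tsum_mul_left]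
    rfl
  have hGbound : 2 * normIsq b h + 2 * ((n:ℝ) * norm2sq e) ≤ 4 * C * n * τ ^ 2 := by
    have h2 : (n:ℝ) * norm2sq e ≤ (n:ℝ) * (C * τ ^ 2) :=
      mul_le_mul_of_nonneg_left hne2 npos.le
    nlinarith
  have h4 : 4 * C ≤ 9 * C * (1 + K) ^ 2 := by
    nlinarith [mul_pos hC hK, mul_pos (mul_pos hC hK) hK]
  constructor
  · -- goal 1
    have hpt : ∀ i : ℕ, ((i:ℝ)+1) ^ (b+1) * (if i < m then a i else 0) ^ 2
        ≤ 2 * (((i:ℝ)+1) ^ (b+1) * h i ^ 2) + 2 * ((n:ℝ) * e i ^ 2) := by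
      intro i
      by_cases hi : i < m
      · simp only [hi, if_true]
        have ha : a i = h i + e i := by rw [he i]; ring
        rw [ha]
        nlinarith [mul_nonneg (wpos i).le (sq_nonneg (h i - e i)),
          mul_le_mul_of_nonneg_right (hwlt i hi) (sq_nonneg (e i))]
      · simp only [hi, if_false]
        have h0 : ((i:ℝ)+1) ^ (b+1) * (0:ℝ) ^ 2 = 0 := by ring
        rw [h0]
        positivity
    have hs : Summable (fun i : ℕ => ((i:ℝ)+1) ^ (b+1) * (if i < m then a i else 0) ^ 2) :=
      hG.of_nonneg_of_le (fun i : ℕ => mul_nonneg (wpos i).le (sq_nonneg _)) hpt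
    have : normIsq b (fun i : ℕ => if i < m then a i else 0)
        ≤ 2 * normIsq b h + 2 * ((n:ℝ) * norm2sq e) := by
      rw [← hGsum]; exact Summable.tsum_le_tsum hpt hs hG
    have hfin : (4:ℝ) * C * n * τ ^ 2 ≤ 9 * C * (1 + K) ^ 2 * n * τ ^ 2 := by
      calc (4:ℝ) * C * n * τ ^ 2 = (4 * C) * (n * τ ^ 2) := by ring
        _ ≤ (9 * C * (1 + K) ^ 2) * (n * τ ^ 2) :=
            mul_le_mul_of_nonneg_right h4 (by positivity)
        _ = 9 * C * (1 + K) ^ 2 * n * τ ^ 2 := by ring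
    linarith
  constructor
  · -- goal 2
    have hpt : ∀ i : ℕ, (n:ℝ) * (if i < m then 0 else a i) ^ 2
        ≤ 2 * (((i:ℝ)+1) ^ (b+1) * h i ^ 2) + 2 * ((n:ℝ) * e i ^ 2) := by
      intro i
      by_cases hi : i < m
      · simp only [hi, if_true]
        have h0 : (n:ℝ) * (0:ℝ) ^ 2 = 0 := by ring
        rw [h0]
        positivity
      · simp only [hi, if_false]
        have ha : a i = h i + e i := by rw [he i]; ring
        rw [ha]
        nlinarith [mul_nonneg npos.le (sq_nonneg (h i - e i)),
          mul_le_mul_of_nonneg_right (hwge i (not_lt.mp hi)) (sq_nonneg (h i))]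
    have hs2 : Summable (fun i : ℕ => (if i < m then 0 else a i) ^ 2) := by
      apply hsa.of_nonneg_of_le (fun i : ℕ => sq_nonneg _)
      intro i
      by_cases hi : i < m <;> simp [hi, sq_nonneg]
    have hs : Summable (fun i : ℕ => (n:ℝ) * (if i < m then 0 else a i) ^ 2) := hs2.mul_left _
    have key : (n:ℝ) * norm2sq (fun i : ℕ => if i < m then 0 else a i)
        ≤ 2 * normIsq b h + 2 * ((n:ℝ) * norm2sq e) := by
      rw [← hGsum, norm2sq, ← tsum_mul_left]
      exact Summable.tsum_le_tsum hpt hs hG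
    have key2 : (n:ℝ) * norm2sq (fun i : ℕ => if i < m then 0 else a i) ≤ (n:ℝ) * (4 * C * τ ^ 2) := by
      calc (n:ℝ) * norm2sq (fun i : ℕ => if i < m then 0 else a i)
          ≤ 4 * C * n * τ ^ 2 := key.trans hGbound
        _ = (n:ℝ) * (4 * C * τ ^ 2) := by ring
    have key3 : norm2sq (fun i : ℕ => if i < m then 0 else a i) ≤ 4 * C * τ ^ 2 :=
      le_of_mul_le_mul_left key2 npos
    have hfin : (4:ℝ) * C * τ ^ 2 ≤ 9 * C * (1 + K) ^ 2 * τ ^ 2 := by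
      calc (4:ℝ) * C * τ ^ 2 = (4 * C) * τ ^ 2 := by ring
        _ ≤ (9 * C * (1 + K) ^ 2) * τ ^ 2 := mul_le_mul_of_nonneg_right h4 (by positivity)
        _ = 9 * C * (1 + K) ^ 2 * τ ^ 2 := by ring
    linarith
  · -- goal 3
    set s := (n : ℝ) ^ (-(1 / (2 * (b + 1)))) with hsdef
    have hspos : 0 < s := Real.rpow_pos_of_pos npos _
    have hs2 : s ^ 2 = (n : ℝ) ^ (-(1 / (b + 1))) := by
      rw [hsdef, ← Real.rpow_natCast ((n:ℝ) ^ (-(1 / (2 * (b + 1))))) 2,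
        ← Real.rpow_mul npos.le]
      congr 1
      push_cast
      field_simp
      try ring
      try tauto
    have hN0 : ∀ x : ℕ → ℝ, 0 ≤ N x := by
      intro x
      have h0 : N (0 : ℕ → ℝ) = 0 := by
        have h1 := hsmul 0 x
        simpa using h1
      have h1 : N ((-1 : ℝ) • x) = N x := by rw [hsmul]; simp
      have h2 : N (x + (-1 : ℝ) • x) ≤ N x + N ((-1 : ℝ) • x) := hadd _ _
      have h3 : x + (-1 : ℝ) • x = 0 := by funext i; simp
      rw [h3, h0, h1] at h2
      linarith
    -- the tail of h
    have hh2pt : ∀ i : ℕ, ((i:ℝ)+1) ^ (b+1) * (if i < m then 0 else h i) ^ 2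
        ≤ ((i:ℝ)+1) ^ (b+1) * h i ^ 2 := by
      intro i
      by_cases hi : i < m
      · simp only [hi, if_true]
        have h0 : ((i:ℝ)+1) ^ (b+1) * (0:ℝ) ^ 2 = 0 := by ring
        rw [h0]
        positivity
      · simp only [hi, if_false]
        exact le_rfl
    have hSh2I : Summable (fun i : ℕ => ((i:ℝ)+1) ^ (b+1) * (if i < m then 0 else h i) ^ 2) :=
      hSh.of_nonneg_of_le (fun i => mul_nonneg (wpos i).le (sq_nonneg _)) hh2pt
    have hX1 : normIsq b (fun i : ℕ => if i < m then 0 else h i) ≤ C * n * τ ^ 2 :=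
      (Summable.tsum_le_tsum hh2pt hSh2I hSh).trans hIh
    have hX1n : 0 ≤ normIsq b (fun i : ℕ => if i < m then 0 else h i) :=
      tsum_nonneg fun i => mul_nonneg (wpos i).le (sq_nonneg _)
    have hSh2sq : Summable (fun i : ℕ => (if i < m then 0 else h i) ^ 2) := by
      apply hSh2.of_nonneg_of_le (fun i => sq_nonneg _)
      intro i
      by_cases hi : i < m <;> simp [hi, sq_nonneg]
    have hY1 : norm2sq (fun i : ℕ => if i < m then 0 else h i) ≤ C * τ ^ 2 := by
      have hpt : ∀ i : ℕ, (n:ℝ) * (if i < m then 0 else h i) ^ 2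
          ≤ ((i:ℝ)+1) ^ (b+1) * (if i < m then 0 else h i) ^ 2 := by
        intro i
        by_cases hi : i < m
        · simp [hi]
        · simp only [hi, if_false]
          exact mul_le_mul_of_nonneg_right (hwge i (not_lt.mp hi)) (sq_nonneg _)
      have key : (n:ℝ) * norm2sq (fun i : ℕ => if i < m then 0 else h i)
          ≤ normIsq b (fun i : ℕ => if i < m then 0 else h i) := by
        rw [norm2sq, ← tsum_mul_left]
        exact Summable.tsum_le_tsum hpt (hSh2sq.mul_left _) hSh2I
      have key2 : (n:ℝ) * norm2sq (fun i : ℕ => if i < m then 0 else h i)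
          ≤ (n:ℝ) * (C * τ ^ 2) := by
        calc (n:ℝ) * norm2sq (fun i : ℕ => if i < m then 0 else h i)
            ≤ C * n * τ ^ 2 := key.trans hX1
          _ = (n:ℝ) * (C * τ ^ 2) := by ring
      exact le_of_mul_le_mul_left key2 npos
    have hY1n : 0 ≤ norm2sq (fun i : ℕ => if i < m then 0 else h i) :=
      tsum_nonneg fun i => sq_nonneg _
    have hNh2 : N (fun i : ℕ => if i < m then 0 else h i) ≤ K * (Real.sqrt C * s) := by
      have h1 := hint (fun i : ℕ => if i < m then 0 else h i) hSh2I
      have h2 := interp_aux b C hb hC n hn _ _ hX1n hY1n hX1 hY1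
      rw [mul_assoc] at h1
      exact h1.trans (mul_le_mul_of_nonneg_left h2 hK.le)
    -- the head of e
    have hSe1I : Summable (fun i : ℕ => ((i:ℝ)+1) ^ (b+1) * (if i < m then e i else 0) ^ 2) := by
      apply summable_of_ne_finset_zero (s := Finset.range m)
      intro i hi
      rw [Finset.mem_range] at hi
      rw [if_neg hi]
      ring
    have hX2 : normIsq b (fun i : ℕ => if i < m then e i else 0) ≤ C * n * τ ^ 2 := by
      have hpt : ∀ i : ℕ, ((i:ℝ)+1) ^ (b+1) * (if i < m then e i else 0) ^ 2
          ≤ (n:ℝ) * e i ^ 2 := by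
        intro i
        by_cases hi : i < m
        · simp only [hi, if_true]
          exact mul_le_mul_of_nonneg_right (hwlt i hi) (sq_nonneg _)
        · simp only [hi, if_false]
          have h0 : ((i:ℝ)+1) ^ (b+1) * (0:ℝ) ^ 2 = 0 := by ring
          rw [h0]
          positivity
      calc normIsq b (fun i : ℕ => if i < m then e i else 0)
          ≤ ∑' i : ℕ, (n:ℝ) * e i ^ 2 := Summable.tsum_le_tsum hpt hSe1I (hSe2.mul_left _)
        _ = (n:ℝ) * norm2sq e := tsum_mul_left
        _ ≤ (n:ℝ) * (C * τ ^ 2) := mul_le_mul_of_nonneg_left hne2 npos.le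
        _ = C * n * τ ^ 2 := by ring
    have hX2n : 0 ≤ normIsq b (fun i : ℕ => if i < m then e i else 0) :=
      tsum_nonneg fun i => mul_nonneg (wpos i).le (sq_nonneg _)
    have hSe1sq : Summable (fun i : ℕ => (if i < m then e i else 0) ^ 2) := by
      apply hSe2.of_nonneg_of_le (fun i => sq_nonneg _)
      intro i
      by_cases hi : i < m <;> simp [hi, sq_nonneg]
    have hY2 : norm2sq (fun i : ℕ => if i < m then e i else 0) ≤ C * τ ^ 2 := by
      have hpt : ∀ i : ℕ, (if i < m then e i else 0) ^ 2 ≤ e i ^ 2 := by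
        intro i
        by_cases hi : i < m <;> simp [hi, sq_nonneg]
      exact (Summable.tsum_le_tsum hpt hSe1sq hSe2).trans hne2
    have hY2n : 0 ≤ norm2sq (fun i : ℕ => if i < m then e i else 0) :=
      tsum_nonneg fun i => sq_nonneg _
    have hNe1 : N (fun i : ℕ => if i < m then e i else 0) ≤ K * (Real.sqrt C * s) := by
      have h1 := hint (fun i : ℕ => if i < m then e i else 0) hSe1I
      have h2 := interp_aux b C hb hC n hn _ _ hX2n hY2n hX2 hY2
      rw [mul_assoc] at h1
      exact h1.trans (mul_le_mul_of_nonneg_left h2 hK.le)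
    -- bound on N e
    have hNe' : N e ≤ Real.sqrt C * s := by
      have hcs : C * (n : ℝ) ^ (-(1 / (b + 1))) = (Real.sqrt C * s) ^ 2 := by
        rw [← hs2, mul_pow, Real.sq_sqrt hC.le]
      have h1 : N e ^ 2 ≤ (Real.sqrt C * s) ^ 2 := hcs ▸ hNe
      calc N e = Real.sqrt (N e ^ 2) := (Real.sqrt_sq (hN0 e)).symm
        _ ≤ Real.sqrt ((Real.sqrt C * s) ^ 2) := Real.sqrt_le_sqrt h1
        _ = Real.sqrt C * s := Real.sqrt_sq (by positivity)
    -- decomposition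
    have hdec : (fun i : ℕ => if i < m then 0 else a i)
        = (fun i : ℕ => if i < m then 0 else h i)
          + (e + (-1 : ℝ) • fun i : ℕ => if i < m then e i else 0) := by
      funext i
      simp only [Pi.add_apply, Pi.smul_apply, smul_eq_mul]
      by_cases hi : i < m
      · simp only [hi, if_true]
        ring
      · simp only [hi, if_false]
        rw [he i]
        ring
    have htri : N (fun i : ℕ => if i < m then 0 else a i)
        ≤ N (fun i : ℕ => if i < m then 0 else h i) + (N e + N (fun i : ℕ => if i < m then e i else 0)) := by
      rw [hdec]
      have t1 := hadd (fun i : ℕ => if i < m then 0 else h i)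
        (e + (-1 : ℝ) • fun i : ℕ => if i < m then e i else 0)
      have t2 := hadd e ((-1 : ℝ) • fun i : ℕ => if i < m then e i else 0)
      have t3 : N ((-1 : ℝ) • fun i : ℕ => if i < m then e i else 0)
          = N (fun i : ℕ => if i < m then e i else 0) := by rw [hsmul]; simp
      rw [t3] at t2
      linarith
    have hfinal : N (fun i : ℕ => if i < m then 0 else a i) ≤ (1 + 2 * K) * (Real.sqrt C * s) := by
      have := htri
      nlinarith [hNh2, hNe1, hNe']
    have hsq : N (fun i : ℕ => if i < m then 0 else a i) ^ 2
        ≤ ((1 + 2 * K) * (Real.sqrt C * s)) ^ 2 :=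
      pow_le_pow_left₀ (hN0 _) hfinal 2
    have hval : ((1 + 2 * K) * (Real.sqrt C * s)) ^ 2
        = (1 + 2 * K) ^ 2 * (C * (n : ℝ) ^ (-(1 / (b + 1)))) := by
      rw [mul_pow, mul_pow, Real.sq_sqrt hC.le, hs2]
    have hZ : (0:ℝ) < (n : ℝ) ^ (-(1 / (b + 1))) := Real.rpow_pos_of_pos npos _
    have hcmp : (1 + 2 * K) ^ 2 * C ≤ 9 * C * (1 + K) ^ 2 := by
      nlinarith [mul_pos hC hK, mul_pos (mul_pos hC hK) hK]
    calc N (fun i : ℕ => if i < m then 0 else a i) ^ 2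
        ≤ (1 + 2 * K) ^ 2 * (C * (n : ℝ) ^ (-(1 / (b + 1)))) := by rw [← hval]; exact hsq
      _ = ((1 + 2 * K) ^ 2 * C) * (n : ℝ) ^ (-(1 / (b + 1))) := by ring
      _ ≤ (9 * C * (1 + K) ^ 2) * (n : ℝ) ^ (-(1 / (b + 1))) :=
          mul_le_mul_of_nonneg_right hcmp hZ.le
end

section
/- Let μ be a finite measure on a measurable space Z, let Φ : Z → Z̄ be a measurable map into a measurable space Z̄, and let μ̄ := Φ_*μ be the pushforward measure. Let k̄ : Z̄ × Z̄ → ℝ be a bounded measurable function, and define the pulled-back kernel k(z, z') := k̄(Φ(z), Φ(z')). Suppose λ ≠ 0 and g ∈ L²(μ) satisfies ∫ k(z, z') g(z') dμ(z') = λ g(z) for μ-almost every z. Then there exists ḡ ∈ L²(μ̄) such that g = ḡ ∘ Φ μ-almost everywhere and ∫ k̄(w̄, w) ḡ(w) dμ̄(w) = λ ḡ(w̄) for μ̄-almost every w̄. -/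
open MeasureTheory

/-- Claim B.2 (ii), substantive direction: an `L²(μ)` eigenfunction of the pulled-back kernel
`k(z,z') = k̄(Φ z, Φ z')` with eigenvalue `λ ≠ 0` is (a.e.) of the form `ḡ ∘ Φ` for an
`L²(Φ_*μ)` eigenfunction `ḡ` of `k̄` with the same eigenvalue. -/
theorem stmt6
    {Z Zbar : Type*} [MeasurableSpace Z] [MeasurableSpace Zbar]
    (μ : Measure Z) [IsFiniteMeasure μ]
    (Φ : Z → Zbar) (hΦ : Measurable Φ)
    (kbar : Zbar → Zbar → ℝ) (hkm : Measurable (Function.uncurry kbar))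
    (M : ℝ) (hbd : ∀ x y, |kbar x y| ≤ M)
    (lam : ℝ) (hlam : lam ≠ 0)
    (g : Z → ℝ) (hg : MemLp g 2 μ)
    (heig : ∀ᵐ z ∂μ, ∫ z', kbar (Φ z) (Φ z') * g z' ∂μ = lam * g z) :
    ∃ gbar : Zbar → ℝ, MemLp gbar 2 (μ.map Φ) ∧
      (g =ᵐ[μ] fun z => gbar (Φ z)) ∧
      (∀ᵐ w ∂(μ.map Φ), ∫ w', kbar w w' * gbar w' ∂(μ.map Φ) = lam * gbar w) := by
  classical
  have hA := hg.aestronglyMeasurable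
  set g' : Z → ℝ := hA.mk g with hg'def
  have hg'sm : StronglyMeasurable g' := hA.stronglyMeasurable_mk
  have hae : g =ᵐ[μ] g' := hA.ae_eq_mk
  have hg' : MemLp g' 2 μ := hg.ae_eq hae
  have hint : Integrable g' μ := hg'.integrable (by norm_num)
  -- the product function is strongly measurable
  have hfsm : StronglyMeasurable (fun p : Zbar × Z => kbar p.1 (Φ p.2) * g' p.2) := by
    have h1 : Measurable (fun p : Zbar × Z => kbar p.1 (Φ p.2)) :=
      hkm.comp (measurable_fst.prodMk (hΦ.comp measurable_snd))
    exact h1.stronglyMeasurable.mul (hg'sm.comp_measurable measurable_snd)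
  set gbar : Zbar → ℝ := fun w => lam⁻¹ * ∫ z, kbar w (Φ z) * g' z ∂μ with hgbardef
  have hGsm : StronglyMeasurable gbar :=
    stronglyMeasurable_const.mul hfsm.integral_prod_right'
  -- integrals with g and g' agree
  have hIeq : ∀ w : Zbar, ∫ z', kbar w (Φ z') * g z' ∂μ = ∫ z', kbar w (Φ z') * g' z' ∂μ := by
    intro w
    refine integral_congr_ae ?_
    filter_upwards [hae] with z' h using by rw [h]
  -- g = gbar ∘ Φ a.e.
  have hcomp : g =ᵐ[μ] fun z => gbar (Φ z) := by
    filter_upwards [heig] with z hz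
    have : gbar (Φ z) = lam⁻¹ * ∫ z', kbar (Φ z) (Φ z') * g' z' ∂μ := rfl
    rw [this, ← hIeq, hz]
    field_simp
  -- boundedness of gbar
  have hGbd : ∀ w : Zbar, |gbar w| ≤ |lam⁻¹| * (M * ∫ z, |g' z| ∂μ) := by
    intro w
    have h1 : |∫ z, kbar w (Φ z) * g' z ∂μ| ≤ ∫ z, |kbar w (Φ z) * g' z| ∂μ := by
      simpa only [Real.norm_eq_abs] using
        norm_integral_le_integral_norm (μ := μ) (fun z => kbar w (Φ z) * g' z)
    have h2 : ∫ z, |kbar w (Φ z) * g' z| ∂μ ≤ ∫ z, M * |g' z| ∂μ := by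
      refine integral_mono_of_nonneg (ae_of_all _ fun z => abs_nonneg _)
        (hint.abs.const_mul M) (ae_of_all _ fun z => ?_)
      show |kbar w (Φ z) * g' z| ≤ M * |g' z|
      rw [abs_mul]
      exact mul_le_mul_of_nonneg_right (hbd _ _) (abs_nonneg _)
    calc |gbar w| = |lam⁻¹| * |∫ z, kbar w (Φ z) * g' z ∂μ| := abs_mul _ _
      _ ≤ |lam⁻¹| * ∫ z, |kbar w (Φ z) * g' z| ∂μ :=
          mul_le_mul_of_nonneg_left h1 (abs_nonneg _)
      _ ≤ |lam⁻¹| * (M * ∫ z, |g' z| ∂μ) := by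
          have h3 := mul_le_mul_of_nonneg_left h2 (abs_nonneg lam⁻¹)
          rwa [integral_const_mul] at h3
  haveI : IsFiniteMeasure (μ.map Φ) := Measure.isFiniteMeasure_map μ Φ
  have hGmem : MemLp gbar 2 (μ.map Φ) := by
    refine (memLp_top_of_bound hGsm.aestronglyMeasurable (|lam⁻¹| * (M * ∫ z, |g' z| ∂μ))
      (ae_of_all _ fun w => ?_)).mono_exponent le_top
    simpa [Real.norm_eq_abs] using hGbd w
  refine ⟨gbar, hGmem, hcomp, ?_⟩
  refine ae_of_all _ fun w => ?_
  -- change of variables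
  have hmeas : AEStronglyMeasurable (fun w' => kbar w w' * gbar w') (μ.map Φ) := by
    have h1 : Measurable (fun w' => kbar w w') :=
      hkm.comp (measurable_const.prodMk measurable_id)
    exact (h1.stronglyMeasurable.mul hGsm).aestronglyMeasurable
  rw [integral_map hΦ.aemeasurable hmeas]
  have hcongr : ∫ z, kbar w (Φ z) * gbar (Φ z) ∂μ = ∫ z, kbar w (Φ z) * g' z ∂μ := by
    refine integral_congr_ae ?_
    filter_upwards [hcomp, hae] with z h1 h2
    rw [← h1, h2]
  rw [hcongr]
  have : gbar w = lam⁻¹ * ∫ z, kbar w (Φ z) * g' z ∂μ := rfl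
  rw [this]
  field_simp
end
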